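/- Let T = (V,E) be a finite tree with a choice of orientation for each edge, and let μ, ν be probability measures on V. For an oriented edge e = (i,j), define K_μ(e) = ∑_{k ∈ V*(i;e)} μ(k), where V*(i;e) is the set of nodes in the component of T − e containing i. Then J = K_μ − K_ν satisfies B·J = μ − ν, where B is the oriented incidence matrix. -/

import Mathlib

open SimpleGraph Finset

private lemma walk_step {V : Type*} {G : SimpleGraph V} {a b x y : V} (w : G.Walk x y)
    (hx : (G.deleteEdges {s(a, b)}).Reachable a x ∨ (G.deleteEdges {s(a, b)}).Reachable b x) :
    (G.deleteEdges {s(a, b)}).Reachable a y ∨ (G.deleteEdges {s(a, b)}).Reachable b y := by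
  induction w with
  | nil => exact hx
  | @cons u v z h q ih =>
    apply ih
    by_cases he : s(u, v) = s(a, b)
    · rw [Sym2.eq_iff] at he
      rcases he with ⟨rfl, rfl⟩ | ⟨rfl, rfl⟩
      · exact Or.inr (Reachable.refl _)
      · exact Or.inl (Reachable.refl _)
    · have hadj' : (G.deleteEdges {s(a, b)}).Adj u v := by
        simp only [deleteEdges_adj, Set.mem_singleton_iff]
        exact ⟨h, he⟩
      rcases hx with h1 | h1
      · exact Or.inl (h1.trans hadj'.reachable)
      · exact Or.inr (h1.trans hadj'.reachable)

private lemma two_comp {V : Type*} {G : SimpleGraph V} (hT : G.IsTree) {a b : V}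
    (hab : G.Adj a b) (y : V) :
    (G.deleteEdges {s(a, b)}).Reachable a y ↔ ¬ (G.deleteEdges {s(a, b)}).Reachable b y := by
  have hbr : G.IsBridge s(a, b) := isAcyclic_iff_forall_adj_isBridge.mp hT.IsAcyclic hab
  have hbr2 : ¬ (G.deleteEdges {s(a, b)}).Reachable a b := (isBridge_iff.mp hbr)
  constructor
  · intro hay hby
    exact hbr2 (hay.trans hby.symm)
  · intro hby
    obtain ⟨w⟩ := hT.isConnected.preconnected a y
    rcases walk_step w (Or.inl (Reachable.refl a)) with h | h
    · exact h
    · exact absurd h hby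

private lemma reach_avoid {V : Type*} {G H : SimpleGraph V} (hle : H ≤ G) {x y : V}
    (w : H.Walk x y) {i : V} (j : V) (hi : i ∉ w.support) :
    (G.deleteEdges {s(i, j)}).Reachable x y := by
  refine ⟨w.transfer _ fun e he => ?_⟩
  rw [edgeSet_deleteEdges]
  refine ⟨SimpleGraph.edgeSet_mono hle (w.edges_subset_edgeSet he), ?_⟩
  simp only [Set.mem_singleton_iff]
  rintro rfl
  exact hi (w.fst_mem_support_of_mem_edges he)

private lemma cut_existsUnique {V E : Type*} (G : SimpleGraph V) (hT : G.IsTree)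
    (s t : E → V) (hadj : ∀ e, G.Adj (s e) (t e))
    (hbij : ∀ a b : V, G.Adj a b →
      ∃! e : E, (s e = a ∧ t e = b) ∨ (s e = b ∧ t e = a))
    {i k : V} (hik : i ≠ k) :
    ∃! e : E, (s e = i ∨ t e = i) ∧
      ¬ (G.deleteEdges {s(s e, t e)}).Reachable i k := by
  classical
  have extract : ∀ e : E, (s e = i ∨ t e = i) →
      ∃ j, G.Adj i j ∧ s(s e, t e) = s(i, j) ∧
        ((s e = i ∧ t e = j) ∨ (s e = j ∧ t e = i)) := by
    intro e hinc
    rcases hinc with h1 | h1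
    · exact ⟨t e, h1 ▸ hadj e, by rw [h1], Or.inl ⟨h1, rfl⟩⟩
    · exact ⟨s e, h1 ▸ (hadj e).symm, by rw [h1]; exact Sym2.eq_swap, Or.inr ⟨rfl, h1⟩⟩
  have cut_eq : ∀ e1 e2 : E,
      ((s e1 = i ∨ t e1 = i) ∧ ¬ (G.deleteEdges {s(s e1, t e1)}).Reachable i k) →
      ((s e2 = i ∨ t e2 = i) ∧ ¬ (G.deleteEdges {s(s e2, t e2)}).Reachable i k) →
      e1 = e2 := by
    rintro e1 e2 ⟨hinc1, hcut1⟩ ⟨hinc2, hcut2⟩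
    obtain ⟨j1, hj1, hq1, hor1⟩ := extract e1 hinc1
    obtain ⟨j2, hj2, hq2, hor2⟩ := extract e2 hinc2
    by_contra hne
    have hjj : j1 ≠ j2 := by
      rintro rfl
      obtain ⟨e0, _, hu⟩ := hbij i j1 hj1
      exact hne ((hu e1 hor1).trans (hu e2 hor2).symm)
    rw [hq1] at hcut1
    rw [hq2] at hcut2
    have h2k : (G.deleteEdges {s(i, j2)}).Reachable j2 k := by
      by_contra hc
      exact hcut2 ((two_comp hT hj2 k).mpr hc)
    obtain ⟨w⟩ := h2k
    have hiw : i ∉ w.support := by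
      intro hmem
      have hji : (G.deleteEdges {s(i, j2)}).Reachable j2 i := ⟨w.takeUntil i hmem⟩
      exact hcut2 (hji.symm.trans ⟨w⟩)
    have h2k' : (G.deleteEdges {s(i, j1)}).Reachable j2 k :=
      reach_avoid (deleteEdges_le _) w j1 hiw
    have hadj12 : (G.deleteEdges {s(i, j1)}).Adj i j2 := by
      rw [deleteEdges_adj]
      refine ⟨hj2, ?_⟩
      simp only [Set.mem_singleton_iff, Sym2.eq_iff]
      rintro (⟨-, rfl⟩ | ⟨h1, h2⟩)
      · exact hjj rfl
      · exact (G.ne_of_adj hj2) h2.symm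
    exact hcut1 (hadj12.reachable.trans h2k')
  obtain ⟨w0⟩ := hT.isConnected.preconnected i k
  have hP : (w0.toPath : G.Walk i k).IsPath := w0.toPath.prop
  obtain ⟨c, h, q, hq⟩ := SimpleGraph.Walk.exists_eq_cons_of_ne hik (w0.toPath : G.Walk i k)
  obtain ⟨e, he, -⟩ := hbij i c h
  have hsym : s(s e, t e) = s(i, c) := by
    rcases he with ⟨h1, h2⟩ | ⟨h1, h2⟩
    · rw [h1, h2]
    · rw [h1, h2]; exact Sym2.eq_swap
  have hinc : s e = i ∨ t e = i := by
    rcases he with ⟨h1, -⟩ | ⟨-, h2⟩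
    · exact Or.inl h1
    · exact Or.inr h2
  have hcut : ¬ (G.deleteEdges {s(s e, t e)}).Reachable i k := by
    rw [hsym]
    intro hr
    have hi : i ∉ q.support := by
      rw [hq, SimpleGraph.Walk.cons_isPath_iff] at hP
      exact hP.2
    have hck : (G.deleteEdges {s(i, c)}).Reachable c k := reach_avoid le_rfl q c hi
    have hbr : G.IsBridge s(i, c) := isAcyclic_iff_forall_adj_isBridge.mp hT.IsAcyclic h
    exact (isBridge_iff.mp hbr) (hr.trans hck.symm)
  exact ⟨e, ⟨hinc, hcut⟩, fun e' h' => cut_eq e' e h' ⟨hinc, hcut⟩⟩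

open scoped Classical in
/-- `Kcut G s t μ e` is the total `μ`-mass of the component of `T - e`
containing the source of the oriented edge `e`. -/
noncomputable def Kcut {V E : Type*} [Fintype V] (G : SimpleGraph V)
    (s t : E → V) (μ : V → ℝ) (e : E) : ℝ :=
  ∑ k, if (G.deleteEdges {Sym2.mk (s e) (t e)}).Reachable (s e) k then μ k else 0

theorem stmt_7 {V E : Type*} [Fintype V] [Fintype E] [DecidableEq V]
    (G : SimpleGraph V) (hT : G.IsTree)
    (s t : E → V) (hadj : ∀ e, G.Adj (s e) (t e))
    (hbij : ∀ a b : V, G.Adj a b →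
      ∃! e : E, (s e = a ∧ t e = b) ∨ (s e = b ∧ t e = a))
    (μ ν : V → ℝ) (hμ0 : ∀ k, 0 ≤ μ k) (hμ1 : ∑ k, μ k = 1)
    (hν0 : ∀ k, 0 ≤ ν k) (hν1 : ∑ k, ν k = 1) :
    ∀ i : V,
      (∑ e, if s e = i then Kcut G s t μ e - Kcut G s t ν e
            else if t e = i then -(Kcut G s t μ e - Kcut G s t ν e) else 0) =
        μ i - ν i := by
  classical
  intro i
  set d : V → ℝ := fun k => μ k - ν k with hd
  set coef : E → ℝ := fun e => if s e = i then (1 : ℝ) else if t e = i then -1 else 0 with hcoef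
  set r : E → V → ℝ := fun e k =>
    if (G.deleteEdges {s(s e, t e)}).Reachable (s e) k then (1 : ℝ) else 0 with hr
  set c : V → ℝ := fun k => ∑ e, coef e * r e k with hc
  have hKd : ∀ e, Kcut G s t μ e - Kcut G s t ν e = ∑ k, r e k * d k := by
    intro e
    simp only [Kcut, hr, hd, ← Finset.sum_sub_distrib]
    refine Finset.sum_congr rfl fun k _ => ?_
    split_ifs <;> ring
  have hLHS : (∑ e, if s e = i then Kcut G s t μ e - Kcut G s t ν e
      else if t e = i then -(Kcut G s t μ e - Kcut G s t ν e) else 0)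
      = ∑ k, c k * d k := by
    have step1 : ∀ e : E, (if s e = i then Kcut G s t μ e - Kcut G s t ν e
        else if t e = i then -(Kcut G s t μ e - Kcut G s t ν e) else 0)
        = ∑ k, coef e * r e k * d k := by
      intro e
      have h0 : (if s e = i then Kcut G s t μ e - Kcut G s t ν e
          else if t e = i then -(Kcut G s t μ e - Kcut G s t ν e) else 0)
          = coef e * (Kcut G s t μ e - Kcut G s t ν e) := by
        simp only [hcoef]
        split_ifs <;> ring
      rw [h0, hKd, Finset.mul_sum]
      exact Finset.sum_congr rfl fun k _ => by ring
    rw [Finset.sum_congr rfl fun e _ => step1 e, Finset.sum_comm]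
    exact Finset.sum_congr rfl fun k _ => by rw [hc, Finset.sum_mul]
  rw [hLHS]
  have hci : ∀ k, k ≠ i → c i - c k = 1 := by
    intro k hk
    obtain ⟨e0, he0, hu0⟩ := cut_existsUnique G hT s t hadj hbij (Ne.symm hk)
    have h1 : c i - c k = ∑ e, (coef e * r e i - coef e * r e k) := by
      rw [hc, ← Finset.sum_sub_distrib]
    rw [h1]
    have hterm : ∀ e : E, coef e * r e i - coef e * r e k
        = if (s e = i ∨ t e = i) ∧ ¬ (G.deleteEdges {s(s e, t e)}).Reachable i k
          then (1 : ℝ) else 0 := by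
      intro e
      have htc := two_comp hT (hadj e)
      by_cases hs : s e = i
      · have hrii : (G.deleteEdges {s(s e, t e)}).Reachable (s e) i := by rw [hs]
        have hri : r e i = 1 := by simp only [hr]; rw [if_pos hrii]
        have hcoe : coef e = 1 := by simp only [hcoef]; rw [if_pos hs]
        rw [hri, hcoe]
        by_cases hrk : (G.deleteEdges {s(s e, t e)}).Reachable i k
        · have hrk2 : (G.deleteEdges {s(s e, t e)}).Reachable (s e) k := hs.symm ▸ hrk
          have hx : r e k = 1 := by simp only [hr]; rw [if_pos hrk2]
          rw [hx, if_neg (fun hP => hP.2 hrk)]; norm_num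
        · have hrk2 : ¬ (G.deleteEdges {s(s e, t e)}).Reachable (s e) k := hs.symm ▸ hrk
          have hx : r e k = 0 := by simp only [hr]; rw [if_neg hrk2]
          rw [hx, if_pos ⟨Or.inl hs, hrk⟩]; norm_num
      · by_cases ht : t e = i
        · have hcoe : coef e = -1 := by simp only [hcoef]; rw [if_neg hs, if_pos ht]
          have hri : r e i = 0 := by
            simp only [hr, ite_eq_right_iff]
            intro hreach
            exact absurd (by rw [ht] : (G.deleteEdges {s(s e, t e)}).Reachable (t e) i)
              ((htc i).mp hreach)
          rw [hcoe, hri]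
          by_cases hrk : (G.deleteEdges {s(s e, t e)}).Reachable i k
          · have hx : r e k = 0 := by
              simp only [hr, ite_eq_right_iff]
              intro hreach
              exact absurd (show (G.deleteEdges {s(s e, t e)}).Reachable (t e) k from
                ht.symm ▸ hrk) ((htc k).mp hreach)
            rw [hx, if_neg (fun hP => hP.2 hrk)]; norm_num
          · have hrk' : ¬ (G.deleteEdges {s(s e, t e)}).Reachable (t e) k := by
              have h5 := hrk
              rw [ht] at h5 ⊢
              exact h5
            have hx : r e k = 1 := by simp only [hr]; rw [if_pos ((htc k).mpr hrk')]
            rw [hx, if_pos ⟨Or.inr ht, hrk⟩]; norm_num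
        · have hcoe : coef e = 0 := by simp only [hcoef]; rw [if_neg hs, if_neg ht]
          rw [hcoe, if_neg (fun hP => hP.1.elim hs ht)]; ring
    rw [Finset.sum_congr rfl fun e _ => hterm e]
    have h2 : ∀ e : E, (if (s e = i ∨ t e = i) ∧
        ¬ (G.deleteEdges {s(s e, t e)}).Reachable i k then (1 : ℝ) else 0)
        = if e = e0 then 1 else 0 := by
      intro e
      by_cases hP : (s e = i ∨ t e = i) ∧ ¬ (G.deleteEdges {s(s e, t e)}).Reachable i k
      · rw [if_pos hP, if_pos (hu0 e hP)]
      · rw [if_neg hP, if_neg fun hh => hP (by rw [hh]; exact he0)]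
    rw [Finset.sum_congr rfl fun e _ => h2 e]
    simp
  have hsum_d : ∑ k, d k = 0 := by
    simp only [hd, Finset.sum_sub_distrib, hμ1, hν1, sub_self]
  have hck : ∀ k, c k * d k = c i * d k - (if k = i then 0 else d k) := by
    intro k
    by_cases hk : k = i
    · subst hk; simp
    · have h3 := hci k hk
      rw [if_neg hk]
      have : c k = c i - 1 := by linarith
      rw [this]; ring
  rw [Finset.sum_congr rfl fun k _ => hck k, Finset.sum_sub_distrib, ← Finset.mul_sum, hsum_d,
    mul_zero]
  have h4 : ∀ k : V, (if k = i then (0 : ℝ) else d k) = d k - (if k = i then d k else 0) := by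
    intro k; split_ifs <;> ring
  rw [Finset.sum_congr rfl fun k _ => h4 k, Finset.sum_sub_distrib, hsum_d,
    Finset.sum_ite_eq' Finset.univ i d]
  simp [hd]
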